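/- Let X ≥ 0 and C > 0 be random variables with P(X > 0) = 1, let ν > 0, q > 0 with 1 − νq > 0, and let ρ_ε(u) = min{u^q, ε} for fixed ε ∈ (0,1), h(a) = a^ν. Then for every sequence (a_n) of positive reals with a_n → 0, liminf_{n→∞} E[X ρ_ε(X h(a_n)/C)] / a_n = ∞. -/

import Mathlib

open MeasureTheory Filter

/-- Case 1 of Theorem 4.4 (non-resilience when `1 − νq > 0`):
`liminf E[X ρ_ε(X h(a_n)/C)]/a_n = ∞`, stated as divergence to `atTop`. -/
theorem stmt10 {Ω : Type*} [MeasurableSpace Ω] (μ : Measure Ω) [IsProbabilityMeasure μ]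
    (X C : Ω → ℝ) (hXm : Measurable X) (hCm : Measurable C)
    (hX : ∀ ω, 0 ≤ X ω) (hXpos : μ {ω | 0 < X ω} = 1) (hC : ∀ ω, 0 < C ω)
    (hXint : Integrable X μ)
    (ν q ε : ℝ) (hν : 0 < ν) (hq : 0 < q) (hνq : 0 < 1 - ν * q)
    (hε0 : 0 < ε) (hε1 : ε < 1)
    (a : ℕ → ℝ) (ha : ∀ n, 0 < a n) (halim : Tendsto a atTop (nhds 0)) :
    Tendsto (fun n =>
        (∫ ω, X ω * min ((X ω * a n ^ ν / C ω) ^ q) ε ∂μ) / a n) atTop atTop := by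
  set S : ℕ → Set Ω := fun m => {ω | (m : ℝ)⁻¹ ≤ X ω ∧ C ω ≤ m} with hS
  have hSm : ∀ m, MeasurableSet (S m) := fun m =>
    (measurableSet_le measurable_const hXm).inter (measurableSet_le hCm measurable_const)
  have hcover : {ω | 0 < X ω} ⊆ ⋃ m, S m := by
    intro ω hω
    obtain ⟨m, hm⟩ := exists_nat_ge (max (X ω)⁻¹ (C ω))
    have hXinv : 0 < (X ω)⁻¹ := inv_pos.2 hω
    refine Set.mem_iUnion.2 ⟨m, ?_, le_trans (le_max_right _ _) hm⟩
    have : (m:ℝ)⁻¹ ≤ ((X ω)⁻¹)⁻¹ := inv_anti₀ hXinv (le_trans (le_max_left _ _) hm)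
    rwa [inv_inv] at this
  obtain ⟨m, hmpos⟩ : ∃ m, 0 < μ (S m) := by
    by_contra h
    push_neg at h
    have h0 : ∀ m, μ (S m) = 0 := fun m => le_antisymm (h m) bot_le
    have : μ {ω | 0 < X ω} = 0 := measure_mono_null hcover (measure_iUnion_null h0)
    rw [hXpos] at this; exact one_ne_zero this
  have hmR : (0:ℝ) < (m:ℝ)⁻¹ := by
    rcases Nat.eq_zero_or_pos m with rfl | hm0
    · exfalso
      have : S 0 = ∅ := by
        ext ω; simp only [hS, Set.mem_setOf_eq, Nat.cast_zero, Set.mem_empty_iff_false,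
          iff_false, not_and, not_le]
        intro _; exact hC ω
      rw [this] at hmpos; simp at hmpos
    · exact inv_pos.2 (by exact_mod_cast hm0)
  set δ : ℝ := (m:ℝ)⁻¹ with hδ
  have hδpos : 0 < δ := hmR
  have hKpos : (0:ℝ) < m := inv_pos.mp hmR
  set p : ℝ := (μ (S m)).toReal with hp
  have hppos : 0 < p := ENNReal.toReal_pos hmpos.ne' (measure_ne_top μ _)
  set c : ℕ → ℝ := fun n => δ * min ((δ * a n ^ ν / (m:ℝ)) ^ q) ε with hc
  have hbase : ∀ n, 0 ≤ δ * a n ^ ν / (m:ℝ) := fun n =>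
    div_nonneg (mul_nonneg hδpos.le (Real.rpow_nonneg (ha n).le ν)) hKpos.le
  have hfmeas : ∀ n, Measurable fun ω => X ω * min ((X ω * a n ^ ν / C ω) ^ q) ε := by
    intro n
    exact hXm.mul ((((hXm.mul measurable_const).div hCm).pow measurable_const).min
      measurable_const)
  have hfnonneg : ∀ n ω, 0 ≤ X ω * min ((X ω * a n ^ ν / C ω) ^ q) ε := by
    intro n ω
    have h1 : 0 ≤ (X ω * a n ^ ν / C ω) ^ q :=
      Real.rpow_nonneg (div_nonneg (mul_nonneg (hX ω) (Real.rpow_nonneg (ha n).le ν)) (hC ω).le) q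
    exact mul_nonneg (hX ω) (le_min h1 hε0.le)
  have hfint : ∀ n, Integrable (fun ω => X ω * min ((X ω * a n ^ ν / C ω) ^ q) ε) μ := by
    intro n
    refine hXint.mono ((hfmeas n).aestronglyMeasurable) (Filter.Eventually.of_forall fun ω => ?_)
    rw [Real.norm_eq_abs, Real.norm_eq_abs, abs_of_nonneg (hfnonneg n ω), abs_of_nonneg (hX ω)]
    calc X ω * min ((X ω * a n ^ ν / C ω) ^ q) ε ≤ X ω * 1 :=
          mul_le_mul_of_nonneg_left (le_trans (min_le_right _ _) hε1.le) (hX ω)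
      _ = X ω := mul_one _
  have hlow : ∀ n, c n * p ≤ ∫ ω, X ω * min ((X ω * a n ^ ν / C ω) ^ q) ε ∂μ := by
    intro n
    have hind : Integrable ((S m).indicator (fun _ => c n)) μ :=
      (integrable_const (c n)).indicator (hSm m)
    have hmono : ∀ ω, (S m).indicator (fun _ => c n) ω ≤
        X ω * min ((X ω * a n ^ ν / C ω) ^ q) ε := by
      intro ω
      by_cases hω : ω ∈ S m
      · rw [Set.indicator_of_mem hω]
        obtain ⟨h1, h2⟩ := hω
        have hXδ : δ ≤ X ω := h1
        have hδle : δ * a n ^ ν / (m:ℝ) ≤ X ω * a n ^ ν / C ω := by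
          have hnum : δ * a n ^ ν ≤ X ω * a n ^ ν :=
            mul_le_mul_of_nonneg_right hXδ (Real.rpow_nonneg (ha n).le ν)
          calc δ * a n ^ ν / (m:ℝ) ≤ δ * a n ^ ν / C ω :=
                div_le_div_of_nonneg_left (mul_nonneg hδpos.le (Real.rpow_nonneg (ha n).le ν))
                  (hC ω) h2
            _ ≤ X ω * a n ^ ν / C ω := div_le_div_of_nonneg_right hnum (hC ω).le
        refine mul_le_mul hXδ ?_ ?_ (hX ω)
        · exact min_le_min (Real.rpow_le_rpow (hbase n) hδle hq.le) le_rfl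
        · exact le_min (Real.rpow_nonneg (hbase n) q) hε0.le
      · rw [Set.indicator_of_notMem hω]; exact hfnonneg n ω
    calc c n * p = ∫ ω, (S m).indicator (fun _ => c n) ω ∂μ := by
          rw [integral_indicator_const _ (hSm m), smul_eq_mul, mul_comm]; rfl
      _ ≤ _ := integral_mono hind (hfint n) hmono
  have hmain : Tendsto (fun n => c n * p / a n) atTop atTop := by
    have htend0 : Tendsto (fun n => (δ * a n ^ ν / (m:ℝ)) ^ q) atTop (nhds 0) := by
      have h1 : Tendsto (fun n => a n ^ ν) atTop (nhds 0) := by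
        have := halim.rpow_const (p := ν) (Or.inr hν.le)
        simpa [Real.zero_rpow hν.ne'] using this
      have h2 : Tendsto (fun n => δ * a n ^ ν / (m:ℝ)) atTop (nhds 0) := by
        have := (h1.const_mul δ).div_const (m:ℝ)
        simpa using this
      have := h2.rpow_const (p := q) (Or.inr hq.le)
      simpa [Real.zero_rpow hq.ne'] using this
    have hev : ∀ᶠ n in atTop, (δ * a n ^ ν / (m:ℝ)) ^ q ≤ ε :=
      htend0.eventually (eventually_le_nhds hε0)
    have hainv : Tendsto (fun n => (a n)⁻¹) atTop atTop :=
      Tendsto.inv_tendsto_nhdsGT_zero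
        (tendsto_nhdsWithin_of_tendsto_nhds_of_eventually_within _ halim
          (Filter.Eventually.of_forall fun n => ha n))
    have hpow : Tendsto (fun n => (a n)⁻¹ ^ (1 - ν * q)) atTop atTop :=
      (tendsto_rpow_atTop hνq).comp hainv
    have heq : ∀ n, (a n)⁻¹ ^ (1 - ν * q) = a n ^ (ν * q) / a n := by
      intro n
      rw [Real.inv_rpow (ha n).le, ← Real.rpow_neg (ha n).le, neg_sub,
        Real.rpow_sub (ha n), Real.rpow_one]
    have hconst : 0 < δ * (δ / (m:ℝ)) ^ q * p :=
      mul_pos (mul_pos hδpos (Real.rpow_pos_of_pos (div_pos hδpos hKpos) q)) hppos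
    have hmain' : Tendsto (fun n => δ * (δ / (m:ℝ)) ^ q * p * (a n ^ (ν * q) / a n))
        atTop atTop :=
      (hpow.congr heq).const_mul_atTop hconst
    refine hmain'.congr' ?_
    filter_upwards [hev] with n hn
    have hmin : min ((δ * a n ^ ν / (m:ℝ)) ^ q) ε = (δ * a n ^ ν / (m:ℝ)) ^ q := min_eq_left hn
    have hsplit : (δ * a n ^ ν / (m:ℝ)) ^ q = (δ / (m:ℝ)) ^ q * a n ^ (ν * q) := by
      rw [show δ * a n ^ ν / (m:ℝ) = δ / (m:ℝ) * a n ^ ν by ring,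
        Real.mul_rpow (div_nonneg hδpos.le hKpos.le) (Real.rpow_nonneg (ha n).le ν),
        ← Real.rpow_mul (ha n).le]
    have hcval : c n = δ * (δ / (m:ℝ)) ^ q * a n ^ (ν * q) := by
      simp only [hc]; rw [min_eq_left hn, hsplit]; ring
    rw [hcval]; ring
  refine tendsto_atTop_mono' atTop ?_ hmain
  filter_upwards with n
  exact div_le_div_of_nonneg_right (hlow n) (ha n).le
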